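/- Suppose f is C^1 with L-Lipschitz gradient, B is symmetric positive semidefinite with ||B|| <= kappa_B, and the step s satisfies f(x) + g^T s + (1/2) s^T B s + (sigma/2)||s||^2 < f(x) with sigma >= 2(L + kappa_B). Then f(x) - f(x+s) > (sigma/4)||s||^2. -/

import Mathlib

open RealInnerProductSpace

/-- Quadratic-regularisation sufficient-decrease lemma: if `f` has `L`-Lipschitz gradient,
`B` is symmetric positive semidefinite with `‖B‖ ≤ κ_B`, the regularised quadratic model
decreases at `s`, and `σ ≥ 2(L + κ_B)`, then `f(x) - f(x+s) > (σ/4)‖s‖²`. -/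
theorem quadratic_sufficient_decrease {n : ℕ}
    (f : EuclideanSpace ℝ (Fin n) → ℝ) (L κB σ : ℝ) (hL : 0 ≤ L) (hκB : 0 ≤ κB)
    (hf : Differentiable ℝ f)
    (hlip : ∀ x y : EuclideanSpace ℝ (Fin n),
      ‖gradient f x - gradient f y‖ ≤ L * ‖x - y‖)
    (B : EuclideanSpace ℝ (Fin n) →L[ℝ] EuclideanSpace ℝ (Fin n))
    (hsym : ∀ u v : EuclideanSpace ℝ (Fin n), ⟪B u, v⟫ = ⟪u, B v⟫)
    (hpsd : ∀ v : EuclideanSpace ℝ (Fin n), 0 ≤ ⟪B v, v⟫)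
    (hB : ‖B‖ ≤ κB)
    (x s : EuclideanSpace ℝ (Fin n))
    (hmodel : f x + ⟪gradient f x, s⟫ + (1 / 2) * ⟪s, B s⟫ + σ / 2 * ‖s‖ ^ 2 < f x)
    (hσ : 2 * (L + κB) ≤ σ) :
    σ / 4 * ‖s‖ ^ 2 < f x - f (x + s) := by
  set g := gradient f x with hg
  -- derivative of ψ
  set ψ : ℝ → ℝ := fun t => f (x + t • s) - t * ⟪g, s⟫ - L * t ^ 2 / 2 * ‖s‖ ^ 2 with hψ
  have hderiv : ∀ t : ℝ, HasDerivAt ψ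
      (⟪gradient f (x + t • s), s⟫ - ⟪g, s⟫ - L * t * ‖s‖ ^ 2) t := by
    intro t
    have h1 : HasDerivAt (fun t : ℝ => x + t • s) s t := by
      simpa using ((hasDerivAt_id t).smul_const s).const_add x
    have h2 : HasDerivAt (fun t : ℝ => f (x + t • s)) ⟪gradient f (x + t • s), s⟫ t := by
      simpa [Function.comp_def] using ((hf (x + t • s)).hasGradientAt.hasFDerivAt.comp_hasDerivAt t h1)
    have h3 : HasDerivAt (fun t : ℝ => t * ⟪g, s⟫) ⟪g, s⟫ t := by
      simpa using (hasDerivAt_id t).mul_const ⟪g, s⟫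
    have h4 : HasDerivAt (fun t : ℝ => L * t ^ 2 / 2 * ‖s‖ ^ 2) (L * t * ‖s‖ ^ 2) t := by
      have : HasDerivAt (fun t : ℝ => L * t ^ 2 / 2 * ‖s‖ ^ 2)
          (L * (2 * t ^ 1) / 2 * ‖s‖ ^ 2) t := by
        exact (((hasDerivAt_pow 2 t).const_mul L).div_const 2).mul_const _
      convert this using 1; ring
    exact (h2.sub h3).sub h4
  have hanti : AntitoneOn ψ (Set.Icc (0:ℝ) 1) := by
    apply antitoneOn_of_deriv_nonpos (convex_Icc 0 1)
    · exact (Continuous.continuousOn (by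
        exact continuous_iff_continuousAt.2 fun t => (hderiv t).continuousAt))
    · intro t ht
      exact (hderiv t).differentiableAt.differentiableWithinAt
    · intro t ht
      rw [interior_Icc] at ht
      rw [(hderiv t).deriv]
      have hb : ⟪gradient f (x + t • s) - g, s⟫ ≤ L * t * ‖s‖ ^ 2 := by
        calc ⟪gradient f (x + t • s) - g, s⟫ ≤ ‖gradient f (x + t • s) - g‖ * ‖s‖ :=
              real_inner_le_norm _ _
          _ ≤ (L * ‖(x + t • s) - x‖) * ‖s‖ := by
              have := hlip (x + t • s) x
              exact mul_le_mul_of_nonneg_right (by simpa [hg] using this) (norm_nonneg s)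
          _ = L * t * ‖s‖ ^ 2 := by
              have : ‖(x + t • s) - x‖ = |t| * ‖s‖ := by
                simp [add_sub_cancel_left, norm_smul, Real.norm_eq_abs]
              rw [this, abs_of_pos ht.1]; ring
      have : ⟪gradient f (x + t • s) - g, s⟫ = ⟪gradient f (x + t • s), s⟫ - ⟪g, s⟫ := by
        rw [inner_sub_left]
      linarith [hb, this]
  have hdesc : f (x + s) ≤ f x + ⟪g, s⟫ + L / 2 * ‖s‖ ^ 2 := by
    have := hanti (Set.left_mem_Icc.2 one_pos.le) (Set.right_mem_Icc.2 one_pos.le) one_pos.le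
    simp only [hψ, one_smul, zero_smul, add_zero] at this
    nlinarith [this]
  have hpsd' : 0 ≤ ⟪s, B s⟫ := by rw [← hsym]; exact hpsd s
  nlinarith [sq_nonneg ‖s‖]
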